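/- (Proposition 3(i), quantitative instance.) Let γ ≥ 1 and let 𝓛₀ ⊂ ℤ^γ be a finite set of nonzero offsets with s₁ := Σ_{l∈𝓛₀} l₁ ≠ 0, and fix ε > 0. For every κ > 0 there exists M₀ ∈ ℕ such that for all integers M₁ ≥ M₀: taking the nonzero spatial frequency ξ = (2π/M₁, 0, …, 0), the quantity Φ̄_ξ = i ε (Σ_{l∈𝓛₀} sin(lᵀξ)) / (2 Σ_{l∈𝓛₀} sin²(lᵀξ/2)) is well defined (its denominator is nonzero), 1 + Φ̄_ξ ≠ 0, and the point z = −1/(1 + Φ̄_ξ) of the generalized critical set satisfies |z| < κ. Thus for large enough networks the set not to be encircled for closed-loop stability, which replaces the point −1, has points in any κ-neighborhood of the origin for some ξ ≠ 0. -/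

import Mathlib

open Real Finset
set_option maxHeartbeats 16000000

lemma aux_sin_sub {t : ℝ} (ht : |t| ≤ 1) : |Real.sin t - t| ≤ |t| ^ 3 := by
  rcases lt_trichotomy t 0 with h | h | h
  · have ht' : 0 < -t := by linarith
    have h1 : Real.sin (-t) ≤ -t := Real.sin_le ht'.le
    have h2 : (-t) - (-t) ^ 3 / 4 < Real.sin (-t) := by
      have := Real.sin_gt_sub_cube ht'
      nlinarith [pow_pos ht' 3]
    rw [Real.sin_neg] at h1 h2
    rw [abs_of_neg h, abs_le]
    constructor <;> nlinarith
  · simp [h]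
  · have h1 : Real.sin t ≤ t := Real.sin_le h.le
    have h2 : t - t ^ 3 / 4 < Real.sin t := by
      have := Real.sin_gt_sub_cube h
      nlinarith [pow_pos h 3]
    rw [abs_of_pos h, abs_le]
    constructor <;> nlinarith

theorem stmt16 (γ : ℕ) (hγ : 0 < γ) (L0 : Finset (Fin γ → ℤ)) (hL0 : ∀ l ∈ L0, l ≠ 0)
    (hs : (∑ l ∈ L0, l ⟨0, hγ⟩) ≠ 0) (ε : ℝ) (hε : 0 < ε) :
    ∀ κ : ℝ, 0 < κ → ∃ M₀ : ℕ, ∀ M₁ : ℕ, M₀ ≤ M₁ →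
      ∀ ξ : Fin γ → ℝ,
        (ξ = fun j => if j = ⟨0, hγ⟩ then 2 * Real.pi / M₁ else 0) →
        (2 * ∑ l ∈ L0, Real.sin ((∑ j, (l j : ℝ) * ξ j) / 2) ^ 2) ≠ 0 ∧
        (1 : ℂ) + Complex.I * (ε : ℂ) *
            ((∑ l ∈ L0, Real.sin (∑ j, (l j : ℝ) * ξ j) : ℝ) : ℂ) /
            ((2 * ∑ l ∈ L0, Real.sin ((∑ j, (l j : ℝ) * ξ j) / 2) ^ 2 : ℝ) : ℂ) ≠ 0 ∧
        ‖(-1 : ℂ) / ((1 : ℂ) + Complex.I * (ε : ℂ) *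
            ((∑ l ∈ L0, Real.sin (∑ j, (l j : ℝ) * ξ j) : ℝ) : ℂ) /
            ((2 * ∑ l ∈ L0, Real.sin ((∑ j, (l j : ℝ) * ξ j) / 2) ^ 2 : ℝ) : ℂ))‖ < κ := by
  intro κ hκ
  set i0 : Fin γ := ⟨0, hγ⟩
  -- real first-coordinate sum
  set s : ℝ := (↑(∑ l ∈ L0, l i0) : ℝ) with hs_def
  have hs0 : s ≠ 0 := Int.cast_ne_zero.mpr hs
  have hs1 : (1 : ℝ) ≤ |s| := by
    rw [hs_def, ← Int.cast_abs]
    exact_mod_cast Int.one_le_abs hs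
  have hsum_cast : s = ∑ l ∈ L0, ((l i0 : ℝ)) := by push_cast [hs_def]; ring
  -- exists l₀ with nonzero first coordinate
  obtain ⟨l₀, hl₀L, hl₀⟩ : ∃ l ∈ L0, (l i0 : ℝ) ≠ 0 := by
    by_contra h
    push_neg at h
    exact hs0 (by rw [hsum_cast]; exact Finset.sum_eq_zero h)
  set A : ℝ := ∑ l ∈ L0, |(l i0 : ℝ)| with hA_def
  have hAs : |s| ≤ A := by rw [hsum_cast]; exact Finset.abs_sum_le_sum_abs _ _
  have hA1 : (1 : ℝ) ≤ A := le_trans hs1 hAs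
  have hA0 : 0 < A := lt_of_lt_of_le one_pos hA1
  set C : ℝ := ∑ l ∈ L0, |(l i0 : ℝ)| ^ 3 with hC_def
  have hC0 : 0 < C := by
    refine Finset.sum_pos' (fun l _ => by positivity) ⟨l₀, hl₀L, by positivity⟩
  set B : ℝ := ∑ l ∈ L0, ((l i0 : ℝ)) ^ 2 with hB_def
  have hB0 : 0 < B := by
    refine Finset.sum_pos' (fun l _ => by positivity) ⟨l₀, hl₀L, by positivity⟩
  -- choose δ and M₀
  set δ : ℝ := min (1 / A) (min (|s| / (2 * C)) (ε * κ * |s| / (4 * B))) with hδ_def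
  have hδ0 : 0 < δ := by
    refine lt_min (by positivity) (lt_min (by positivity) (by positivity))
  clear_value s A C B δ
  refine ⟨⌈2 * Real.pi / δ⌉₊ + 1, ?_⟩
  intro M₁ hM₁ ξ hξ
  have hM₁0 : 0 < (M₁ : ℝ) := by
    have : 1 ≤ M₁ := le_trans (Nat.le_add_left 1 _) hM₁
    exact_mod_cast this
  set x : ℝ := 2 * Real.pi / M₁ with hx_def
  clear_value x
  have hx0 : 0 < x := by rw [hx_def]; positivity
  have hxδ : x ≤ δ := by
    rw [hx_def, div_le_iff₀ hM₁0]
    have h1 : (2 * Real.pi / δ) ≤ (⌈2 * Real.pi / δ⌉₊ : ℝ) := Nat.le_ceil _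
    have h2 : ((⌈2 * Real.pi / δ⌉₊ + 1 : ℕ) : ℝ) ≤ (M₁ : ℝ) := by exact_mod_cast hM₁
    push_cast at h2
    have : 2 * Real.pi / δ ≤ (M₁ : ℝ) := by linarith
    calc 2 * Real.pi = (2 * Real.pi / δ) * δ := by field_simp
    _ ≤ (M₁ : ℝ) * δ := by exact mul_le_mul_of_nonneg_right this hδ0.le
    _ = δ * M₁ := by ring
  rw [hδ_def] at hxδ
  have hxA : x * A ≤ 1 := by
    have : x ≤ 1 / A := le_trans hxδ (min_le_left _ _)
    calc x * A ≤ (1 / A) * A := mul_le_mul_of_nonneg_right this hA0.le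
    _ = 1 := by field_simp
  have hx1 : x ≤ 1 := by nlinarith
  have hxC : x * C ≤ |s| / 2 := by
    have h : x ≤ |s| / (2 * C) := le_trans hxδ (le_trans (min_le_right _ _) (min_le_left _ _))
    calc x * C ≤ (|s| / (2 * C)) * C := mul_le_mul_of_nonneg_right h hC0.le
    _ = |s| / 2 := by field_simp
  have hxB : x * B ≤ ε * κ * |s| / 4 := by
    have h : x ≤ ε * κ * |s| / (4 * B) := le_trans hxδ (le_trans (min_le_right _ _) (min_le_right _ _))
    calc x * B ≤ (ε * κ * |s| / (4 * B)) * B := mul_le_mul_of_nonneg_right h hB0.le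
    _ = ε * κ * |s| / 4 := by field_simp
  -- inner sums
  have hinner : ∀ l : Fin γ → ℤ, (∑ j, (l j : ℝ) * ξ j) = (l i0 : ℝ) * x := by
    intro l
    rw [hξ]
    simp only [mul_ite, mul_zero]
    rw [Finset.sum_ite_eq' Finset.univ i0 (fun j => (l j : ℝ) * x)]
    simp
  -- per-element bound |l i0| * x ≤ 1
  have hlx1 : ∀ l ∈ L0, |(l i0 : ℝ)| * x ≤ 1 := by
    intro l hl
    have hle : |(l i0 : ℝ)| ≤ A := by
      rw [hA_def]
      apply Finset.single_le_sum (f := fun l : Fin γ → ℤ => |(l i0 : ℝ)|) _ hl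
      intro l _
      exact abs_nonneg _
    nlinarith
  set N : ℝ := ∑ l ∈ L0, Real.sin ((l i0 : ℝ) * x) with hN_def
  set D : ℝ := 2 * ∑ l ∈ L0, Real.sin (((l i0 : ℝ) * x) / 2) ^ 2 with hD_def
  clear_value N D
  -- numerator lower bound
  have hNdiff : |N - x * s| ≤ x ^ 3 * C := by
    have : N - x * s = ∑ l ∈ L0, (Real.sin ((l i0 : ℝ) * x) - (l i0 : ℝ) * x) := by
      rw [hN_def, hsum_cast, Finset.mul_sum, ← Finset.sum_sub_distrib]
      congr 1; ext l; ring
    rw [this, hC_def, Finset.mul_sum]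
    refine le_trans (Finset.abs_sum_le_sum_abs _ _) (Finset.sum_le_sum ?_)
    intro l hl
    have h1 : |(l i0 : ℝ) * x| ≤ 1 := by
      rw [abs_mul, abs_of_pos hx0]; exact hlx1 l hl
    calc |Real.sin ((l i0 : ℝ) * x) - (l i0 : ℝ) * x| ≤ |(l i0 : ℝ) * x| ^ 3 := aux_sin_sub h1
    _ = x ^ 3 * |(l i0 : ℝ)| ^ 3 := by
        rw [abs_mul, abs_of_pos hx0]; ring
  have hNlow : x * |s| / 2 ≤ |N| := by
    have h1 : x ^ 3 * C ≤ x * |s| / 2 := by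
      nlinarith [mul_le_mul_of_nonneg_left hxC (by positivity : (0:ℝ) ≤ x ^ 2),
        mul_le_mul_of_nonneg_right hx1 hx0.le, abs_nonneg s, hx0.le, hC0.le]
    have h2 : |x * s| - |N - x * s| ≤ |N| := by
      have := abs_sub_abs_le_abs_sub (x * s) N
      rw [abs_sub_comm] at this
      linarith
    rw [abs_mul, abs_of_pos hx0] at h2
    linarith
  -- denominator bounds
  have hDub : D ≤ B * x ^ 2 / 2 := by
    rw [hD_def, hB_def]
    have : ∀ l ∈ L0, Real.sin (((l i0 : ℝ) * x) / 2) ^ 2 ≤ ((l i0 : ℝ)) ^ 2 * x ^ 2 / 4 := by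
      intro l _
      have h := Real.abs_sin_le_abs (x := ((l i0 : ℝ) * x) / 2)
      have h2 : Real.sin (((l i0 : ℝ) * x) / 2) ^ 2 ≤ (((l i0 : ℝ) * x) / 2) ^ 2 := by
        rw [← sq_abs, ← sq_abs ((((l i0 : ℝ)) * x) / 2)]
        exact pow_le_pow_left₀ (abs_nonneg _) h 2
      nlinarith
    have hsum := Finset.sum_le_sum this
    have hB : (∑ l ∈ L0, ((l i0 : ℝ)) ^ 2 * x ^ 2 / 4) = (∑ l ∈ L0, ((l i0 : ℝ)) ^ 2) * x ^ 2 / 4 := by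
      rw [← Finset.sum_div, ← Finset.sum_mul]
    rw [hB] at hsum
    linarith
  have hD0 : 0 < D := by
    rw [hD_def]
    have hterm : 0 < Real.sin (((l₀ i0 : ℝ) * x) / 2) ^ 2 := by
      have hne : Real.sin (((l₀ i0 : ℝ) * x) / 2) ≠ 0 := by
        have habs : |(l₀ i0 : ℝ) * x / 2| < Real.pi := by
          have h1 : |(l₀ i0 : ℝ)| * x ≤ 1 := hlx1 l₀ hl₀L
          have h2 : |(l₀ i0 : ℝ) * x / 2| = |(l₀ i0 : ℝ)| * x / 2 := by
            rw [abs_div, abs_mul, abs_of_pos hx0]; simp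
          rw [h2]
          nlinarith [Real.pi_gt_three]
        rw [abs_lt] at habs
        rw [ne_eq, Real.sin_eq_zero_iff_of_lt_of_lt habs.1 habs.2]
        have : (l₀ i0 : ℝ) * x ≠ 0 := mul_ne_zero hl₀ (ne_of_gt hx0)
        intro h
        exact this (by linarith)
      positivity
    have hle : Real.sin (((l₀ i0 : ℝ) * x) / 2) ^ 2
        ≤ ∑ l ∈ L0, Real.sin (((l i0 : ℝ) * x) / 2) ^ 2 := by
      apply Finset.single_le_sum (f := fun l : Fin γ → ℤ => Real.sin (((l i0 : ℝ) * x) / 2) ^ 2) _ hl₀L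
      intro l _
      exact sq_nonneg _
    linarith
  -- the ratio
  set y : ℝ := ε * N / D with hy_def
  clear_value y
  have hylow : 4 / κ ≤ |y| := by
    have h1 : |y| = ε * |N| / D := by
      rw [hy_def, abs_div, abs_mul, abs_of_pos hε, abs_of_pos hD0]
    rw [h1]
    have h2 : ε * (x * |s| / 2) ≤ ε * |N| := by nlinarith
    have h3 : ε * (x * |s| / 2) / (B * x ^ 2 / 2) ≤ ε * |N| / D := by
      apply div_le_div₀ (by positivity) h2 hD0 hDub
    refine le_trans ?_ h3
    rw [div_le_div_iff₀ hκ (by positivity)]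
    -- 4 * (B x² / 2) ≤ ε x |s| / 2 * κ  i.e. 2 B x² ≤ ε κ |s| x /2 : from x B ≤ εκ|s|/4
    nlinarith [mul_le_mul_of_nonneg_left hxB hx0.le]
  have hy0 : y ≠ 0 := by
    intro h; rw [h, abs_zero] at hylow
    have : (0:ℝ) < 4 / κ := by positivity
    linarith
  -- rewrite complex expression
  have hsum1 : (∑ l ∈ L0, Real.sin (∑ j, (l j : ℝ) * ξ j)) = N := by
    rw [hN_def]; exact Finset.sum_congr rfl fun l _ => by rw [hinner l]
  have hsum2 : (2 * ∑ l ∈ L0, Real.sin ((∑ j, (l j : ℝ) * ξ j) / 2) ^ 2) = D := by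
    rw [hD_def]; congr 1; exact Finset.sum_congr rfl fun l _ => by rw [hinner l]
  rw [hsum1, hsum2]
  refine ⟨ne_of_gt hD0, ?_, ?_⟩
  · -- 1 + I ε N / D ≠ 0
    have heq : (1 : ℂ) + Complex.I * (ε : ℂ) * (N : ℂ) / (D : ℂ) = 1 + (y : ℂ) * Complex.I := by
      rw [hy_def]; push_cast; field_simp
    rw [heq]
    intro h
    have him := congrArg Complex.im h
    simp at him
    exact hy0 him
  · have heq : (1 : ℂ) + Complex.I * (ε : ℂ) * (N : ℂ) / (D : ℂ) = 1 + (y : ℂ) * Complex.I := by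
      rw [hy_def]; push_cast; field_simp
    rw [heq]
    have hnorm : |y| ≤ ‖(1 : ℂ) + (y : ℂ) * Complex.I‖ := by
      have : ((1 : ℂ) + (y : ℂ) * Complex.I).im = y := by simp
      calc |y| = |((1 : ℂ) + (y : ℂ) * Complex.I).im| := by rw [this]
      _ ≤ ‖(1 : ℂ) + (y : ℂ) * Complex.I‖ := Complex.abs_im_le_norm _
      _ = ‖(1 : ℂ) + (y : ℂ) * Complex.I‖ := rfl
    have hw0 : ((1 : ℂ) + (y : ℂ) * Complex.I) ≠ 0 := by
      intro h
      rw [h, norm_zero] at hnorm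
      exact hy0 (abs_nonpos_iff.mp hnorm)
    rw [norm_div, norm_neg, norm_one]
    have hyk : 0 < |y| := abs_pos.mpr hy0
    have h1 : 1 / ‖(1 : ℂ) + (y : ℂ) * Complex.I‖ ≤ 1 / |y| := by
      apply one_div_le_one_div_of_le hyk hnorm
    have h2 : 1 / |y| ≤ κ / 4 := by
      rw [div_le_div_iff₀ hyk (by norm_num)]
      have : 4 / κ * κ ≤ |y| * κ := mul_le_mul_of_nonneg_right hylow hκ.le
      rw [div_mul_cancel₀] at this
      · linarith
      · exact ne_of_gt hκ
    calc 1 / ‖(1 : ℂ) + (y : ℂ) * Complex.I‖ ≤ 1 / |y| := h1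
    _ ≤ κ / 4 := h2
    _ < κ := by linarith
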